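/- Every ultrametric space is ultraparacompact: if (X,d) is a metric space whose metric satisfies the strong triangle inequality d(x,z) ≤ max(d(x,y), d(y,z)) for all x, y, z, then every open cover of X has a refinement that is a partition of X into clopen sets. -/
import Mathlib


/-- A partition of the space `X` into (nonempty, pairwise disjoint) clopen sets. -/
def IsClopenPartition (X : Type*) [TopologicalSpace X] (P : Set (Set X)) : Prop :=
  (∀ S ∈ P, IsClopen S) ∧ (∀ S ∈ P, S.Nonempty) ∧
    (∀ S ∈ P, ∀ T ∈ P, S ≠ T → S ∩ T = ∅) ∧ ⋃₀ P = Set.univ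

/-- A space is ultraparacompact if every open cover has a refinement that is a
partition of the space into clopen sets. -/
def Ultraparacompact (X : Type*) [TopologicalSpace X] : Prop :=
  ∀ 𝒰 : Set (Set X), (∀ U ∈ 𝒰, IsOpen U) → ⋃₀ 𝒰 = Set.univ →
    ∃ P : Set (Set X), IsClopenPartition X P ∧ ∀ S ∈ P, ∃ U ∈ 𝒰, S ⊆ U

/-- A space is ultranormal if any two disjoint closed sets are separated by a clopen set. -/
def Ultranormal (X : Type*) [TopologicalSpace X] : Prop :=
  ∀ R S : Set X, IsClosed R → IsClosed S → Disjoint R S →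
    ∃ C : Set X, IsClopen C ∧ R ⊆ C ∧ S ∩ C = ∅

/-- A space is zero-dimensional if the clopen sets form a basis for the topology. -/
def ZeroDimensional (X : Type*) [TopologicalSpace X] : Prop :=
  TopologicalSpace.IsTopologicalBasis {s : Set X | IsClopen s}

/-- Every ultrametric space (a metric space whose metric satisfies the strong triangle
inequality) is ultraparacompact. -/
theorem ultrametric_ultraparacompact (X : Type*) [MetricSpace X]
    (hultra : ∀ x y z : X, dist x z ≤ max (dist x y) (dist y z)) :
    Ultraparacompact X := by
  classical
  intro 𝒰 hopen hcover
  -- balls with equal radius: same center property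
  have ball_eq : ∀ (x y : X) (c : ℝ), dist x y < c →
      Metric.ball x c = Metric.ball y c := by
    intro x y c hxy
    ext w
    simp only [Metric.mem_ball]
    constructor
    · intro hw
      calc dist w y ≤ max (dist w x) (dist x y) := hultra w x y
        _ < c := max_lt hw hxy
    · intro hw
      calc dist w x ≤ max (dist w y) (dist y x) := hultra w y x
        _ < c := max_lt hw (by rwa [dist_comm])
  have ball_clopen : ∀ (x : X) (c : ℝ), 0 < c → IsClopen (Metric.ball x c) := by
    intro x c hc
    refine ⟨?_, Metric.isOpen_ball⟩
    rw [← isOpen_compl_iff]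
    rw [Metric.isOpen_iff]
    intro y hy
    refine ⟨c, hc, ?_⟩
    intro w hw hw2
    apply hy
    rw [Metric.mem_ball] at hw hw2 ⊢
    calc dist y x ≤ max (dist y w) (dist w x) := hultra y w x
      _ < c := max_lt (by rwa [dist_comm]) hw2
  have hex : ∀ x : X, ∃ n : ℕ, ∃ U ∈ 𝒰, Metric.ball x ((1/2 : ℝ)^n) ⊆ U := by
    intro x
    have hx : x ∈ ⋃₀ 𝒰 := by rw [hcover]; trivial
    obtain ⟨U, hU, hxU⟩ := hx
    obtain ⟨ε, hε, hball⟩ := Metric.isOpen_iff.mp (hopen U hU) x hxU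
    obtain ⟨n, hn⟩ := exists_pow_lt_of_lt_one hε (by norm_num : (1/2 : ℝ) < 1)
    exact ⟨n, U, hU, (Metric.ball_subset_ball hn.le).trans hball⟩
  set r : X → ℝ := fun x => (1/2 : ℝ) ^ (Nat.find (hex x)) with hr
  have rpos : ∀ x, 0 < r x := fun x => pow_pos (by norm_num) _
  have rsub : ∀ x, ∃ U ∈ 𝒰, Metric.ball x (r x) ⊆ U := fun x => Nat.find_spec (hex x)
  -- key: if y ∈ ball x (r x) then balls coincide
  have key : ∀ x y : X, y ∈ Metric.ball x (r x) →
      Metric.ball y (r y) = Metric.ball x (r x) := by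
    have half : ∀ x y : X, y ∈ Metric.ball x (r x) → Nat.find (hex y) ≤ Nat.find (hex x) := by
      intro x y hy
      rw [Metric.mem_ball, dist_comm] at hy
      apply Nat.find_le
      obtain ⟨U, hU, hsub⟩ := rsub x
      refine ⟨U, hU, ?_⟩
      rw [← ball_eq x y _ hy]
      exact hsub
    intro x y hy
    have h1 := half x y hy
    have hxy : dist x y < r x := by rwa [Metric.mem_ball, dist_comm] at hy
    have h2 : Nat.find (hex x) ≤ Nat.find (hex y) := by
      apply half y x
      rw [Metric.mem_ball, dist_comm]
      calc dist y x < r x := by rwa [dist_comm] at hxy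
        _ ≤ r y := by
          simp only [hr]
          exact pow_le_pow_of_le_one (by norm_num) (by norm_num) h1
    have hreq : r y = r x := by
      simp only [hr]
      rw [le_antisymm h1 h2]
    rw [hreq, ← ball_eq x y _ hxy]
  refine ⟨Set.range (fun x => Metric.ball x (r x)), ⟨?_, ?_, ?_, ?_⟩, ?_⟩
  · rintro S ⟨x, rfl⟩
    exact ball_clopen x (r x) (rpos x)
  · rintro S ⟨x, rfl⟩
    exact ⟨x, Metric.mem_ball_self (rpos x)⟩
  · rintro S ⟨x, rfl⟩ T ⟨y, rfl⟩ hne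
    by_contra h
    obtain ⟨w, hw1, hw2⟩ := Set.nonempty_iff_ne_empty.mpr h
    exact hne ((key x w hw1).symm.trans (key y w hw2))
  · apply Set.eq_univ_of_forall
    intro x
    exact ⟨Metric.ball x (r x), ⟨x, rfl⟩, Metric.mem_ball_self (rpos x)⟩
  · rintro S ⟨x, rfl⟩
    exact rsub x
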